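/- For every real s, the function x ↦ P(x, 1/x + s·x^{-3/2}) tends to s^4 + 2s^2 as x → +∞. -/

import Mathlib

open Filter
noncomputable def P (x y : ℝ) : ℝ := y^4*x^6 - 4*y^3*x^5 + (3*y^3+6*y^2)*x^4 + (-7*y^2-4*y)*x^3 + (3*y^2+5*y+1)*x^2 + (-3*y-1)*x + y
theorem stmt7 : ∀ s : ℝ,
    Tendsto (fun x : ℝ => P x (1/x + s*x^(-(3:ℝ)/2))) atTop (nhds (s^4 + 2*s^2)) := by
  intro s
  set q : ℝ → ℝ := fun t => s^4 + 2*s^2 + 3*s^3*t + 3*s*t*(1+s*t) + t^2*(1+s*t) with hq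
  have hqc : Continuous q := by fun_prop
  have ht : Tendsto (fun x : ℝ => x ^ (-(1:ℝ)/2)) atTop (nhds 0) := by
    have := tendsto_rpow_neg_atTop (y := (1:ℝ)/2) (by norm_num)
    simpa [neg_div] using this
  have h0 : Tendsto (fun x : ℝ => q (x ^ (-(1:ℝ)/2))) atTop (nhds (s^4 + 2*s^2)) := by
    have := (hqc.tendsto 0).comp ht
    simpa [hq, Function.comp_def] using this
  refine h0.congr' ?_
  filter_upwards [eventually_gt_atTop (0:ℝ)] with x hx
  set t := x ^ (-(1:ℝ)/2) with htdef
  have htpos : 0 < t := Real.rpow_pos_of_pos hx _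
  have ht2 : t^2 = 1/x := by
    rw [htdef, ← Real.rpow_natCast (x ^ (-(1:ℝ)/2)) 2, ← Real.rpow_mul hx.le]
    norm_num
    exact Real.rpow_neg_one x
  have ht3 : t^3 = x ^ (-(3:ℝ)/2) := by
    rw [htdef, ← Real.rpow_natCast (x ^ (-(1:ℝ)/2)) 3, ← Real.rpow_mul hx.le]
    norm_num [neg_div]
  have hx' : x = 1/t^2 := by
    rw [ht2]; field_simp
  have hy : 1/x + s*x^(-(3:ℝ)/2) = t^2 + s*t^3 := by rw [← ht2, ← ht3]
  rw [hy, hx', P, hq]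
  have htne : t ≠ 0 := ne_of_gt htpos
  field_simp
  ring
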